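/- (Penalties can cause persistent disparity.) There exist a finite set 𝒴 of nonzero reals, a kernel q(y|y',d) with q(y|y',d) > 0 for all y, y', d, group probabilities p(A) = p(B) = 1/2, a penalty level λ > 0 with g(x) = x, and initial group distributions p_0(·|A), p_0(·|B), such that under the myopic dynamics (where at each step the institution uses a maximizer of J_t) the disparity satisfies lim_{t→∞} Δ_t > Δ_0 > 0. A witness is 𝒴 = {−2, −1, 2}, λ = 0.7, the transition kernel of Figure 1 (q(−2|−1,1)=0.8, q(−1|−1,1)=0.1, q(2|−1,1)=0.1; q(−2|−1,0)=0.1, q(−1|−1,0)=0.1, q(2|−1,0)=0.8; q(·|−2,d) = (0.8,0.1,0.1) and q(·|2,d) = (0.1,0.1,0.8) for both d), with p_0(·|A) = (0.3, 0.1, 0.6) and p_0(·|B) = (0.5, 0.1, 0.4), which gives Δ_0 = 0.1 and lim_{t→∞} Δ_t = 4/30. -/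
import Mathlib

/-!
Dynamic setting: `Y` is a finite set of nonzero real qualifications; groups `A`/`B`
are encoded as `true`/`false` with weights `wA`/`wB`; `q y y' d` is the probability
of moving to qualification `y` from `y'` under decision `d`; `pA t`/`pB t` are the
group qualification distributions at time `t`, and at every step the institution
uses a myopic maximizer of the penalized objective.
-/

open Finset Filter Topology
open scoped Classical

noncomputable section

/-- A policy assigns selection probabilities in `[0,1]`. -/
def Admissible (Y : Finset ℝ) (π : Bool → ℝ → ℝ) : Prop :=
  ∀ c, ∀ y ∈ Y, 0 ≤ π c y ∧ π c y ≤ 1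

/-- `g` is nondecreasing, nonnegative, convex on `[0,∞)` with `g 0 = 0`. -/
def AdmissiblePenalty (g : ℝ → ℝ) : Prop :=
  g 0 = 0 ∧ MonotoneOn g (Set.Ici 0) ∧ ConvexOn ℝ (Set.Ici 0) g ∧
    ∀ x ∈ Set.Ici (0 : ℝ), 0 ≤ g x

/-- `r` is a probability distribution on `Y`. -/
def IsDist (Y : Finset ℝ) (r : ℝ → ℝ) : Prop :=
  (∀ y ∈ Y, 0 ≤ r y) ∧ ∑ y ∈ Y, r y = 1

/-- `q` is a Markov kernel on `Y` (for each decision `d`). -/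
def IsKernel (Y : Finset ℝ) (q : ℝ → ℝ → Bool → ℝ) : Prop :=
  (∀ y ∈ Y, ∀ y' ∈ Y, ∀ d, 0 ≤ q y y' d) ∧
    ∀ y' ∈ Y, ∀ d, (∑ y ∈ Y, q y y' d) = 1

/-- One-step update of a group distribution `r` under selection probabilities `sel`:
`p'(y) = ∑_{y'} r(y')·(sel(y')·q(y|y',1) + (1 − sel(y'))·q(y|y',0))`. -/
def stepDist (Y : Finset ℝ) (q : ℝ → ℝ → Bool → ℝ) (r sel : ℝ → ℝ) (y : ℝ) : ℝ :=
  ∑ y' ∈ Y, r y' * (sel y' * q y y' true + (1 - sel y') * q y y' false)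

/-- Instantaneous utility `∑_{c,y} p(c)·p_t(y|c)·y·π(1|c,y)`. -/
def dUtil (Y : Finset ℝ) (wA wB : ℝ) (pA pB : ℝ → ℝ) (π : Bool → ℝ → ℝ) : ℝ :=
  wA * ∑ y ∈ Y, pA y * y * π true y + wB * ∑ y ∈ Y, pB y * y * π false y

/-- Instantaneous disparity. -/
def dDisp (Y : Finset ℝ) (pA pB : ℝ → ℝ) (π : Bool → ℝ → ℝ) : ℝ :=
  |(∑ y ∈ Y, pA y * π true y) - ∑ y ∈ Y, pB y * π false y|

/-- Instantaneous penalized objective. -/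
def dObj (Y : Finset ℝ) (wA wB : ℝ) (pA pB : ℝ → ℝ) (g : ℝ → ℝ) (lam : ℝ)
    (π : Bool → ℝ → ℝ) : ℝ :=
  dUtil Y wA wB pA pB π - lam * g (dDisp Y pA pB π)

/-- `π` is a myopic optimal policy for the state `(pA, pB)`. -/
def dOptimal (Y : Finset ℝ) (wA wB : ℝ) (pA pB : ℝ → ℝ) (g : ℝ → ℝ) (lam : ℝ)
    (π : Bool → ℝ → ℝ) : Prop :=
  Admissible Y π ∧
    ∀ π', Admissible Y π' → dObj Y wA wB pA pB g lam π' ≤ dObj Y wA wB pA pB g lam π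

/-- A trajectory of the myopic dynamics: at every time `t` the institution uses a
myopic optimal policy `πt t`, and the group distributions evolve accordingly. -/
def Trajectory (Y : Finset ℝ) (q : ℝ → ℝ → Bool → ℝ) (wA wB : ℝ) (g : ℝ → ℝ)
    (lam : ℝ) (pA pB : ℕ → ℝ → ℝ) (πt : ℕ → Bool → ℝ → ℝ) : Prop :=
  ∀ t, dOptimal Y wA wB (pA t) (pB t) g lam (πt t) ∧
    (∀ y ∈ Y, pA (t + 1) y = stepDist Y q (pA t) (πt t true) y) ∧
    (∀ y ∈ Y, pB (t + 1) y = stepDist Y q (pB t) (πt t false) y)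

/-- The utility-maximizing threshold selection rule. -/
def thr : ℝ → ℝ := fun y => if 0 < y then 1 else 0

/-! ### Auxiliary construction for Statement 11 -/

namespace Stmt11Aux

/-- The qualification set `{-2, -1, 2}`. -/
def Yw : Finset ℝ := {-2, -1, 2}

/-- The "downward" kernel row `(0.8, 0.1, 0.1)` on `(-2, -1, 2)`. -/
def rowD (y : ℝ) : ℝ := if y = -2 then 8/10 else 1/10

/-- The "upward" kernel row `(0.1, 0.1, 0.8)` on `(-2, -1, 2)`. -/
def rowU (y : ℝ) : ℝ := if y = 2 then 8/10 else 1/10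

/-- The transition kernel of Figure 1. -/
def qw (y y' : ℝ) (d : Bool) : ℝ :=
  if y' = 2 ∨ (y' = -1 ∧ d = false) then rowU y else rowD y

/-- Mass of group A at qualification `2` at time `t`. -/
def aw (t : ℕ) : ℝ := 17/30 + (1/30) * (7/10)^t

/-- Mass of group B at qualification `2` at time `t`. -/
def bw (t : ℕ) : ℝ := 10/30 + (2/30) * (7/10)^t

/-- Distribution of group A at time `t`. -/
def pAw (t : ℕ) (y : ℝ) : ℝ :=
  if y = 2 then aw t else if y = -1 then 1/10 else 9/10 - aw t

/-- Distribution of group B at time `t`. -/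
def pBw (t : ℕ) (y : ℝ) : ℝ :=
  if y = 2 then bw t else if y = -1 then 1/10 else 9/10 - bw t

/-- The myopically optimal policy: group A selected only at `2`, group B at `-1` and `2`. -/
def πw : Bool → ℝ → ℝ := fun c y =>
  if c then (if y = 2 then 1 else 0) else (if y = -2 then 0 else 1)

lemma sumY (f : ℝ → ℝ) : ∑ y ∈ Yw, f y = f (-2) + f (-1) + f 2 := by
  have h1 : (-2:ℝ) ∉ ({-1, 2} : Finset ℝ) := by norm_num
  have h2 : (-1:ℝ) ∉ ({2} : Finset ℝ) := by norm_num
  rw [show Yw = insert (-2) (insert (-1) ({2} : Finset ℝ)) from rfl,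
    Finset.sum_insert h1, Finset.sum_insert h2, Finset.sum_singleton, add_assoc]

lemma x_nonneg (t : ℕ) : (0:ℝ) ≤ (7/10)^t := by positivity

lemma x_le_one (t : ℕ) : (7/10:ℝ)^t ≤ 1 := pow_le_one₀ (by norm_num) (by norm_num)

lemma aw_bounds (t : ℕ) : 17/30 ≤ aw t ∧ aw t ≤ 18/30 := by
  unfold aw
  constructor <;> nlinarith [x_nonneg t, x_le_one t]

lemma bw_bounds (t : ℕ) : 10/30 ≤ bw t ∧ bw t ≤ 12/30 := by
  unfold bw
  constructor <;> nlinarith [x_nonneg t, x_le_one t]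

lemma gap (t : ℕ) : 1/10 + 1/10 ≤ aw t - bw t := by
  unfold aw bw
  nlinarith [x_le_one t]

lemma pAw_m2 (t : ℕ) : pAw t (-2) = 9/10 - aw t := by norm_num [pAw]
lemma pAw_m1 (t : ℕ) : pAw t (-1) = 1/10 := by norm_num [pAw]
lemma pAw_2 (t : ℕ) : pAw t 2 = aw t := by norm_num [pAw]
lemma pBw_m2 (t : ℕ) : pBw t (-2) = 9/10 - bw t := by norm_num [pBw]
lemma pBw_m1 (t : ℕ) : pBw t (-1) = 1/10 := by norm_num [pBw]
lemma pBw_2 (t : ℕ) : pBw t 2 = bw t := by norm_num [pBw]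
lemma piA_m2 : πw true (-2) = 0 := by norm_num [πw]
lemma piA_m1 : πw true (-1) = 0 := by norm_num [πw]
lemma piA_2 : πw true 2 = 1 := by norm_num [πw]
lemma piB_m2 : πw false (-2) = 0 := by norm_num [πw]
lemma piB_m1 : πw false (-1) = 1 := by norm_num [πw]
lemma piB_2 : πw false 2 = 1 := by norm_num [πw]

/-- Optimality of `πw` at every time `t`. -/
lemma opt (t : ℕ) :
    dOptimal Yw (1/2) (1/2) (pAw t) (pBw t) (fun x => x) (7/10) πw := by
  obtain ⟨ha1, ha2⟩ := aw_bounds t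
  obtain ⟨hb1, hb2⟩ := bw_bounds t
  have hgap := gap t
  constructor
  · intro c y hy
    unfold πw
    rcases c <;> split_ifs <;> norm_num
  · intro π' hπ'
    obtain ⟨hu1, hu1'⟩ := hπ' true (-2) (by norm_num [Yw])
    obtain ⟨hu2, hu2'⟩ := hπ' true (-1) (by norm_num [Yw])
    obtain ⟨hu3, hu3'⟩ := hπ' true 2 (by norm_num [Yw])
    obtain ⟨hv1, hv1'⟩ := hπ' false (-2) (by norm_num [Yw])
    obtain ⟨hv2, hv2'⟩ := hπ' false (-1) (by norm_num [Yw])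
    obtain ⟨hv3, hv3'⟩ := hπ' false 2 (by norm_num [Yw])
    have k1 : 0 ≤ (9/10 - aw t) * π' true (-2) := mul_nonneg (by linarith) hu1
    have k2 : 0 ≤ aw t * (1 - π' true 2) := mul_nonneg (by linarith) (by linarith)
    have k3 : 0 ≤ (9/10 - bw t) * π' false (-2) := mul_nonneg (by linarith) hv1
    have k4 : 0 ≤ bw t * (1 - π' false 2) := mul_nonneg (by linarith) (by linarith)
    unfold dObj dUtil dDisp
    rw [sumY, sumY, sumY, sumY, sumY, sumY, sumY, sumY]
    simp only [pAw_m2, pAw_m1, pAw_2, pBw_m2, pBw_m1, pBw_2,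
      piA_m2, piA_m1, piA_2, piB_m2, piB_m1, piB_2]
    rcases abs_cases ((9/10 - aw t) * π' true (-2) + 1/10 * π' true (-1) + aw t * π' true 2 -
        ((9/10 - bw t) * π' false (-2) + 1/10 * π' false (-1) + bw t * π' false 2)) with
      ⟨h1, h1'⟩ | ⟨h1, h1'⟩ <;>
    rcases abs_cases ((9/10 - aw t) * 0 + 1/10 * 0 + aw t * 1 -
        ((9/10 - bw t) * 0 + 1/10 * 1 + bw t * 1)) with ⟨h2, h2'⟩ | ⟨h2, h2'⟩ <;>
    rw [h1, h2] <;> linarith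

/-- The disparity along the trajectory. -/
lemma disp (t : ℕ) :
    dDisp Yw (pAw t) (pBw t) πw = 2/15 - (1/30) * (7/10)^t := by
  unfold dDisp
  rw [sumY, sumY]
  simp only [pAw_m2, pAw_m1, pAw_2, pBw_m2, pBw_m1, pBw_2,
    piA_m2, piA_m1, piA_2, piB_m2, piB_m1, piB_2]
  rcases abs_cases ((9/10 - aw t) * 0 + 1/10 * 0 + aw t * 1 -
      ((9/10 - bw t) * 0 + 1/10 * 1 + bw t * 1)) with ⟨h, h'⟩ | ⟨h, h'⟩
  · rw [h]; unfold aw bw; ring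
  · exfalso
    have := gap t
    linarith

end Stmt11Aux

/-- Penalties can cause persistent disparity. There exist a finite
set of nonzero qualifications, an everywhere-positive kernel, equal group weights
`1/2`, a penalty level `λ > 0` with `g(x) = x`, and initial distributions, such that
along a trajectory of the myopic dynamics the disparity `Δ_t` converges to a limit
strictly larger than `Δ_0 > 0`. -/
theorem stmt_11 :
    ∃ (Y : Finset ℝ) (q : ℝ → ℝ → Bool → ℝ) (lam : ℝ)
      (pA pB : ℕ → ℝ → ℝ) (πt : ℕ → Bool → ℝ → ℝ) (L : ℝ),
      (∀ y ∈ Y, y ≠ 0) ∧ IsKernel Y q ∧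
      (∀ y ∈ Y, ∀ y' ∈ Y, ∀ d : Bool, 0 < q y y' d) ∧
      0 < lam ∧
      IsDist Y (pA 0) ∧ IsDist Y (pB 0) ∧
      Trajectory Y q (1 / 2) (1 / 2) (fun x => x) lam pA pB πt ∧
      Tendsto (fun t => dDisp Y (pA t) (pB t) (πt t)) atTop (𝓝 L) ∧
      0 < dDisp Y (pA 0) (pB 0) (πt 0) ∧
      dDisp Y (pA 0) (pB 0) (πt 0) < L := by
  open Stmt11Aux in
  refine ⟨Yw, qw, 7/10, pAw, pBw, fun _ => πw, 2/15, ?_, ⟨?_, ?_⟩, ?_, by norm_num,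
    ⟨?_, ?_⟩, ⟨?_, ?_⟩, ?_, ?_, ?_, ?_⟩
  · intro y hy
    simp only [Yw, Finset.mem_insert, Finset.mem_singleton] at hy
    rcases hy with rfl | rfl | rfl <;> norm_num
  · intro y _ y' _ d
    unfold qw rowU rowD
    split <;> split <;> norm_num
  · intro y' _ d
    unfold qw
    by_cases h : y' = 2 ∨ (y' = -1 ∧ d = false)
    · simp only [if_pos h]
      rw [sumY]
      norm_num [rowU]
    · simp only [if_neg h]
      rw [sumY]
      norm_num [rowD]
  · intro y _ y' _ d
    unfold qw rowU rowD
    split <;> split <;> norm_num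
  · intro y hy
    simp only [Yw, Finset.mem_insert, Finset.mem_singleton] at hy
    rcases hy with rfl | rfl | rfl <;>
      simp only [pAw_m2, pAw_m1, pAw_2] <;> norm_num [aw]
  · rw [sumY, pAw_m2, pAw_m1, pAw_2]; ring
  · intro y hy
    simp only [Yw, Finset.mem_insert, Finset.mem_singleton] at hy
    rcases hy with rfl | rfl | rfl <;>
      simp only [pBw_m2, pBw_m1, pBw_2] <;> norm_num [bw]
  · rw [sumY, pBw_m2, pBw_m1, pBw_2]; ring
  · intro t
    refine ⟨opt t, ?_, ?_⟩
    · intro y hy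
      simp only [Yw, Finset.mem_insert, Finset.mem_singleton] at hy
      unfold stepDist
      rw [sumY]
      rcases hy with rfl | rfl | rfl <;>
        simp only [pAw_m2, pAw_m1, pAw_2, piA_m2, piA_m1, piA_2] <;>
        norm_num [qw, rowU, rowD, aw, pow_succ] <;> ring
    · intro y hy
      simp only [Yw, Finset.mem_insert, Finset.mem_singleton] at hy
      unfold stepDist
      rw [sumY]
      rcases hy with rfl | rfl | rfl <;>
        simp only [pBw_m2, pBw_m1, pBw_2, piB_m2, piB_m1, piB_2] <;>
        norm_num [qw, rowU, rowD, bw, pow_succ] <;> ring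
  · simp only [disp]
    have h : Tendsto (fun t : ℕ => (7/10:ℝ)^t) atTop (𝓝 0) :=
      tendsto_pow_atTop_nhds_zero_of_lt_one (by norm_num) (by norm_num)
    have := (h.const_mul (1/30:ℝ)).const_sub (2/15:ℝ)
    simpa using this
  · rw [disp]; norm_num
  · rw [disp]; norm_num
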